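/- Let G be a simple graph that is 7-regular, has girth 5, and has diameter 2 (i.e., G is the Hoffman-Singleton graph). Then G is PRCF-bad: every proper edge coloring of G contains a rainbow cycle. -/

import Mathlib

open SimpleGraph

universe u v

/-- An edge coloring is proper if distinct incident edges (edges sharing a vertex)
receive distinct colors. -/
def IsProperEdgeColoring {V : Type u} {C : Type v} (G : SimpleGraph V) (φ : Sym2 V → C) : Prop :=
  ∀ ⦃e₁ e₂ : Sym2 V⦄, e₁ ∈ G.edgeSet → e₂ ∈ G.edgeSet → e₁ ≠ e₂ →
    (∃ v, v ∈ e₁ ∧ v ∈ e₂) → φ e₁ ≠ φ e₂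

section HoffmanSingletonAux
attribute [local instance] Classical.propDecidable
variable {V : Type u} {G : SimpleGraph V}

lemma girth5_egirth (hg : G.girth = 5) : G.egirth = 5 := by
  have hne : G.egirth ≠ ⊤ := by
    intro h
    simp [girth, h] at hg
  rw [← ENat.coe_toNat hne, show G.egirth.toNat = 5 from hg]
  rfl

lemma girth5_no3' (hg : G.girth = 5) {a b c : V} (hab : G.Adj a b) (hbc : G.Adj b c)
    (hca : G.Adj c a) : False := by
  have hw : (Walk.cons hab (Walk.cons hbc (Walk.cons hca Walk.nil))).IsCycle := by
    simp [Walk.isCycle_def, Walk.isTrail_def, Sym2.eq, Sym2.rel_iff',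
      hab.ne, hbc.ne, hca.ne, hca.ne', hab.ne', hbc.ne']
  have := le_egirth.mp (le_of_eq (girth5_egirth hg).symm) a _ hw
  simp at this
  exact (by norm_num : ¬(5:ℕ∞) ≤ 3) this

lemma girth5_no4' (hg : G.girth = 5) {a b c d : V} (hab : G.Adj a b) (hbc : G.Adj b c)
    (hcd : G.Adj c d) (hda : G.Adj d a) (hac : a ≠ c) (hbd : b ≠ d) : False := by
  have hw : (Walk.cons hab (Walk.cons hbc (Walk.cons hcd (Walk.cons hda Walk.nil)))).IsCycle := by
    simp [Walk.isCycle_def, Walk.isTrail_def, Sym2.eq, Sym2.rel_iff',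
      hab.ne, hbc.ne, hcd.ne, hda.ne, hab.ne', hbc.ne', hcd.ne', hda.ne', hac, hbd, hac.symm, hbd.symm]
  have := le_egirth.mp (le_of_eq (girth5_egirth hg).symm) a _ hw
  simp at this
  exact (by norm_num : ¬(5:ℕ∞) ≤ 4) this

lemma diam2_common' (hd : G.diam = 2) {u v : V} (hne : u ≠ v) (hna : ¬ G.Adj u v) :
    ∃ w, G.Adj u w ∧ G.Adj w v := by
  have het : G.ediam ≠ ⊤ := by
    intro h
    rw [diam_eq_zero_of_ediam_eq_top h] at hd
    omega
  have hed : G.ediam = 2 := by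
    rw [← ENat.coe_toNat het, show G.ediam.toNat = 2 from hd]; rfl
  have h2 : G.edist u v ≤ 2 := hed ▸ edist_le_ediam
  have h0 : G.edist u v ≠ 0 := by simp [edist_eq_zero_iff, hne]
  have h1 : G.edist u v ≠ 1 := by simp [edist_eq_one_iff_adj, hna]
  have htop : G.edist u v ≠ ⊤ := by
    intro h; rw [h] at h2; exact absurd h2 (by norm_num)
  set n := (G.edist u v).toNat with hndef
  have hn : G.edist u v = (n : ℕ∞) := (ENat.coe_toNat htop).symm
  have hn2 : n = 2 := by
    rw [hn] at h2 h0 h1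
    have h2' : n ≤ 2 := by exact_mod_cast h2
    have h0' : n ≠ 0 := by exact_mod_cast h0
    have h1' : n ≠ 1 := by exact_mod_cast h1
    omega
  obtain ⟨p, hp⟩ := exists_walk_of_edist_eq_coe (by rw [hn, hn2] : G.edist u v = ((2:ℕ):ℕ∞))
  match p, hp with
  | .cons h1 (.cons h2 .nil), _ => exact ⟨_, h1, h2⟩

noncomputable def xcomp (G : SimpleGraph V) (u v : V) : V :=
  if h : ∃ w, G.Adj u w ∧ G.Adj w v then h.choose else u

lemma xcomp_spec {u v : V} (h : ∃ w, G.Adj u w ∧ G.Adj w v) :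
    G.Adj u (xcomp G u v) ∧ G.Adj (xcomp G u v) v := by
  rw [xcomp, dif_pos h]; exact h.choose_spec

lemma xcomp_eq (hg : G.girth = 5) {u v w : V} (hne : u ≠ v) (hna : ¬ G.Adj u v)
    (h1 : G.Adj u w) (h2 : G.Adj w v) : xcomp G u v = w := by
  have hex : ∃ w, G.Adj u w ∧ G.Adj w v := ⟨w, h1, h2⟩
  obtain ⟨ha, hb⟩ := xcomp_spec hex
  by_contra hne'
  exact girth5_no4' hg h1 h2 hb.symm ha.symm hne (Ne.symm hne')

def C5 (G : SimpleGraph V) (v1 v2 v3 v4 v5 : V) : Prop :=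
  G.Adj v1 v2 ∧ G.Adj v2 v3 ∧ G.Adj v3 v4 ∧ G.Adj v4 v5 ∧ G.Adj v5 v1 ∧
  v1 ≠ v3 ∧ v2 ≠ v4 ∧ v3 ≠ v5 ∧ v1 ≠ v4 ∧ v2 ≠ v5


lemma C5_def (v1 v2 v3 v4 v5 : V) : C5 G v1 v2 v3 v4 v5 ↔
    (G.Adj v1 v2 ∧ G.Adj v2 v3 ∧ G.Adj v3 v4 ∧ G.Adj v4 v5 ∧ G.Adj v5 v1 ∧
    v1 ≠ v3 ∧ v2 ≠ v4 ∧ v3 ≠ v5 ∧ v1 ≠ v4 ∧ v2 ≠ v5) := Iff.rfl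

namespace C5
variable {v1 v2 v3 v4 v5 : V}

lemma rot (h : C5 G v1 v2 v3 v4 v5) : C5 G v2 v3 v4 v5 v1 := by
  obtain ⟨h12,h23,h34,h45,h51,n13,n24,n35,n14,n25⟩ := h
  exact ⟨h23,h34,h45,h51,h12,n24,n35,n14.symm,n25,n13.symm⟩

lemma rev (h : C5 G v1 v2 v3 v4 v5) : C5 G v5 v4 v3 v2 v1 := by
  obtain ⟨h12,h23,h34,h45,h51,n13,n24,n35,n14,n25⟩ := h
  exact ⟨h45.symm,h34.symm,h23.symm,h12.symm,h51.symm,n35.symm,n24.symm,n13.symm,n25.symm,n14.symm⟩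

lemma not13 (h : C5 G v1 v2 v3 v4 v5) (hg : G.girth = 5) : ¬ G.Adj v1 v3 := fun ha =>
  girth5_no3' hg h.1 h.2.1 ha.symm

lemma not14 (h : C5 G v1 v2 v3 v4 v5) (hg : G.girth = 5) : ¬ G.Adj v1 v4 := fun ha =>
  girth5_no4' hg h.1 h.2.1 h.2.2.1 ha.symm h.2.2.2.2.2.1 h.2.2.2.2.2.2.1

lemma adj_class (h : C5 G v1 v2 v3 v4 v5) (hg : G.girth = 5) {u w : V}
    (hu : u ∈ ({v1,v2,v3,v4,v5} : Finset V)) (hw : w ∈ ({v1,v2,v3,v4,v5} : Finset V))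
    (huw : G.Adj u w) :
    (u,w) ∈ ({(v1,v2),(v2,v3),(v3,v4),(v4,v5),(v5,v1),
              (v2,v1),(v3,v2),(v4,v3),(v5,v4),(v1,v5)} : Finset (V×V)) := by
  have n13 := h.not13 hg
  have n24 := h.rot.not13 hg
  have n35 := h.rot.rot.not13 hg
  have n41 := h.rot.rot.rot.not13 hg
  have n52 := h.rot.rot.rot.rot.not13 hg
  have n31 : ¬ G.Adj v3 v1 := fun ha => n13 ha.symm
  have n42 : ¬ G.Adj v4 v2 := fun ha => n24 ha.symm
  have n53 : ¬ G.Adj v5 v3 := fun ha => n35 ha.symm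
  have n14 : ¬ G.Adj v1 v4 := fun ha => n41 ha.symm
  have n25 : ¬ G.Adj v2 v5 := fun ha => n52 ha.symm
  simp only [Finset.mem_insert, Finset.mem_singleton] at hu hw ⊢
  rcases hu with rfl|rfl|rfl|rfl|rfl <;> rcases hw with rfl|rfl|rfl|rfl|rfl <;>
    simp_all [G.irrefl]

lemma next_unique (h : C5 G v1 v2 v3 v4 v5) (hg : G.girth = 5) {u w x y : V}
    (hu : u ∈ ({v1,v2,v3,v4,v5} : Finset V)) (hw : w ∈ ({v1,v2,v3,v4,v5} : Finset V))
    (hx : x ∈ ({v1,v2,v3,v4,v5} : Finset V)) (hy : y ∈ ({v1,v2,v3,v4,v5} : Finset V))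
    (huw : G.Adj u w) (hwx : G.Adj w x) (hwy : G.Adj w y) (hxu : x ≠ u) (hyu : y ≠ u) :
    x = y := by
  obtain ⟨h12,h23,h34,h45,h51,m13,m24,m35,m14,m25⟩ := h
  have d12 := h12.ne; have d23 := h23.ne; have d34 := h34.ne; have d45 := h45.ne
  have d51 := h51.ne
  have c1 := adj_class ⟨h12,h23,h34,h45,h51,m13,m24,m35,m14,m25⟩ hg hu hw huw
  have c2 := adj_class ⟨h12,h23,h34,h45,h51,m13,m24,m35,m14,m25⟩ hg hw hx hwx
  have c3 := adj_class ⟨h12,h23,h34,h45,h51,m13,m24,m35,m14,m25⟩ hg hw hy hwy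
  simp only [Finset.mem_insert, Finset.mem_singleton, Prod.mk.injEq] at c1 c2 c3
  rcases c1 with ⟨rfl,rfl⟩|⟨rfl,rfl⟩|⟨rfl,rfl⟩|⟨rfl,rfl⟩|⟨rfl,rfl⟩|⟨rfl,rfl⟩|⟨rfl,rfl⟩|⟨rfl,rfl⟩|⟨rfl,rfl⟩|⟨rfl,rfl⟩ <;>
  rcases c2 with ⟨e1,rfl⟩|⟨e1,rfl⟩|⟨e1,rfl⟩|⟨e1,rfl⟩|⟨e1,rfl⟩|⟨e1,rfl⟩|⟨e1,rfl⟩|⟨e1,rfl⟩|⟨e1,rfl⟩|⟨e1,rfl⟩ <;>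
  rcases c3 with ⟨e2,rfl⟩|⟨e2,rfl⟩|⟨e2,rfl⟩|⟨e2,rfl⟩|⟨e2,rfl⟩|⟨e2,rfl⟩|⟨e2,rfl⟩|⟨e2,rfl⟩|⟨e2,rfl⟩|⟨e2,rfl⟩ <;>
    simp_all
end C5

/-- oriented 3-paths -/
noncomputable def P3 (G : SimpleGraph V) [Fintype V] : Finset (V×V×V×V) :=
  Finset.univ.filter fun q => G.Adj q.1 q.2.1 ∧ G.Adj q.2.1 q.2.2.1 ∧ G.Adj q.2.2.1 q.2.2.2 ∧
    q.1 ≠ q.2.2.1 ∧ q.2.1 ≠ q.2.2.2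

noncomputable def nu (G : SimpleGraph V) (q : V×V×V×V) : Finset V :=
  {q.1, q.2.1, q.2.2.1, q.2.2.2, xcomp G q.1 q.2.2.2}

lemma mem_P3 [Fintype V] {a b c d : V} : (a,b,c,d) ∈ P3 G ↔
    G.Adj a b ∧ G.Adj b c ∧ G.Adj c d ∧ a ≠ c ∧ b ≠ d := by
  simp [P3]

lemma C5.toP3 [Fintype V] {v1 v2 v3 v4 v5 : V} (h : C5 G v1 v2 v3 v4 v5) (hg : G.girth = 5) :
    (v1,v2,v3,v4) ∈ P3 G ∧ nu G (v1,v2,v3,v4) = {v1,v2,v3,v4,v5} := by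
  rw [C5_def] at h
  obtain ⟨h12,h23,h34,h45,h51,n13,n24,n35,n14,n25⟩ := h
  refine ⟨mem_P3.mpr ⟨h12,h23,h34,n13,n24⟩, ?_⟩
  have hx : xcomp G v1 v4 = v5 :=
    xcomp_eq hg n14 (((C5_def _ _ _ _ _).mpr ⟨h12,h23,h34,h45,h51,n13,n24,n35,n14,n25⟩).not14 hg)
      h51.symm h45.symm
  simp only [nu, hx]

lemma P3.toC5 [Fintype V] (hg : G.girth = 5) (hd : G.diam = 2) {a b c d : V}
    (hq : (a,b,c,d) ∈ P3 G) : C5 G a b c d (xcomp G a d) := by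
  obtain ⟨hab,hbc,hcd,hac,hbd⟩ := mem_P3.mp hq
  have had : a ≠ d := by
    rintro rfl
    exact girth5_no3' hg hab hbc hcd
  have hnad : ¬ G.Adj a d := fun h => girth5_no4' hg hab hbc hcd h.symm hac hbd
  obtain ⟨hax, hxd⟩ := xcomp_spec (diam2_common' hd had hnad)
  set x := xcomp G a d with hxdef
  have hxb : x ≠ b := by
    rintro rfl
    exact girth5_no3' hg hbc hcd hxd.symm
  have hxc : x ≠ c := by
    rintro rfl
    exact girth5_no3' hg hab hbc hax.symm
  rw [C5_def]
  exact ⟨hab, hbc, hcd, hxd.symm, hax.symm, hac, hbd, fun h => hxc h.symm, had, fun h => hxb h.symm⟩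

variable [Fintype V]

noncomputable def E2 (G : SimpleGraph V) [Fintype V] : Finset (V×V) :=
  Finset.univ.filter fun p => G.Adj p.1 p.2

lemma mem_E2 {p : V×V} : p ∈ E2 G ↔ G.Adj p.1 p.2 := by simp [E2]

lemma card_P3 (hreg : G.IsRegularOfDegree 7) : (P3 G).card = 36 * (E2 G).card := by
  rw [Finset.card_eq_sum_card_fiberwise (f := fun q : V×V×V×V => (q.2.1, q.2.2.1)) (t := E2 G)
    (fun q hq => by
      obtain ⟨a,b,c,d⟩ := q
      simp only [E2, Finset.mem_filter, Finset.mem_univ, true_and]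
      exact Finset.mem_coe.mpr (mem_E2.mpr (mem_P3.mp hq).2.1))]
  rw [Finset.sum_congr rfl (fun p hp => ?_), Finset.sum_const, smul_eq_mul, mul_comm]
  obtain ⟨b, c⟩ := p
  have hbc : G.Adj b c := by simpa [E2] using hp
  have hset : (P3 G).filter (fun q => (q.2.1, q.2.2.1) = (b,c)) =
      (((G.neighborFinset b).erase c) ×ˢ ((G.neighborFinset c).erase b)).image
        (fun r : V×V => (r.1, b, c, r.2)) := by
    ext ⟨a',b',c',d'⟩
    simp only [Finset.mem_filter, Finset.mem_image, Finset.mem_product, Finset.mem_erase,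
      mem_neighborFinset, mem_P3, Prod.mk.injEq, Prod.exists]
    constructor
    · rintro ⟨⟨h1,h2,h3,h4,h5⟩, rfl, rfl⟩
      exact ⟨a', d', ⟨⟨h4, h1.symm⟩, ⟨fun h => h5 h.symm, h3⟩⟩, rfl, rfl, rfl, rfl⟩
    · rintro ⟨a'', d'', ⟨⟨hne1, ha1⟩, ⟨hne2, hd1⟩⟩, rfl, rfl, rfl, rfl⟩
      exact ⟨⟨ha1.symm, hbc, hd1, hne1, fun h => hne2 h.symm⟩, rfl, rfl⟩
  rw [hset, Finset.card_image_of_injective _ (fun r r' h => by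
      simpa [Prod.ext_iff] using h),
    Finset.card_product, Finset.card_erase_of_mem (by simpa using hbc),
    Finset.card_erase_of_mem (by simpa using hbc.symm)]
  have hb := hreg b; have hc := hreg c
  rw [degree] at hb hc
  rw [hb, hc]

lemma card_mono_le (hreg : G.IsRegularOfDegree 7) {C : Type v} (φ : Sym2 V → C)
    (hφ : ∀ ⦃e₁ e₂ : Sym2 V⦄, e₁ ∈ G.edgeSet → e₂ ∈ G.edgeSet → e₁ ≠ e₂ →
      (∃ x, x ∈ e₁ ∧ x ∈ e₂) → φ e₁ ≠ φ e₂) :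
    ((P3 G).filter fun q => φ s(q.1,q.2.1) = φ s(q.2.2.1,q.2.2.2)).card ≤ 6 * (E2 G).card := by
  set M := (P3 G).filter fun q => φ s(q.1,q.2.1) = φ s(q.2.2.1,q.2.2.2) with hM
  rw [Finset.card_eq_sum_card_fiberwise (f := fun q : V×V×V×V => (q.2.1, q.2.2.1)) (t := E2 G)
    (fun q hq => by
      obtain ⟨a,b,c,d⟩ := q
      simp only [E2, Finset.mem_filter, Finset.mem_univ, true_and]
      exact Finset.mem_coe.mpr (mem_E2.mpr (mem_P3.mp (Finset.mem_filter.mp hq).1).2.1))]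
  calc ∑ p ∈ E2 G, (M.filter fun q => (q.2.1, q.2.2.1) = p).card
      ≤ ∑ p ∈ E2 G, 6 := by
        refine Finset.sum_le_sum fun p hp => ?_
        obtain ⟨b, c⟩ := p
        have hbc : G.Adj b c := by simpa [E2] using hp
        have h6 : ((G.neighborFinset b).erase c).card = 6 := by
          rw [Finset.card_erase_of_mem (by simpa using hbc), ← degree, hreg b]
        refine le_trans (Finset.card_le_card_of_injOn (fun q => q.1) ?_ ?_) (le_of_eq h6)
        · rintro ⟨a,b',c',d⟩ hq
          obtain ⟨hq1, hq2⟩ := Finset.mem_filter.mp hq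
          obtain ⟨rfl, rfl⟩ : b' = b ∧ c' = c := by simpa [Prod.ext_iff] using hq2
          obtain ⟨hmem, _⟩ := Finset.mem_filter.mp hq1
          obtain ⟨hab,hbc',hcd,hac,hbd⟩ := mem_P3.mp hmem
          simp only [Finset.mem_coe, Finset.mem_erase, mem_neighborFinset]
          exact ⟨fun h => hac h, hab.symm⟩
        · rintro ⟨a1,b1,c1,d1⟩ hq ⟨a2,b2,c2,d2⟩ hq2 hfst
          simp only [Finset.coe_filter, Set.mem_setOf_eq] at hq hq2
          obtain ⟨hq1, hqp⟩ := hq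
          obtain ⟨hq21, hq2p⟩ := hq2
          have eb1 : b1 = b := (Prod.ext_iff.mp hqp).1
          have ec1 : c1 = c := (Prod.ext_iff.mp hqp).2
          have eb2 : b2 = b := (Prod.ext_iff.mp hq2p).1
          have ec2 : c2 = c := (Prod.ext_iff.mp hq2p).2
          have ea : a1 = a2 := hfst
          have ecc : c1 = c2 := ec1.trans ec2.symm
          obtain ⟨hm1, he1⟩ := Finset.mem_filter.mp hq1
          obtain ⟨hm2, he2⟩ := Finset.mem_filter.mp hq21
          obtain ⟨hab,hbc1,hcd1,hac1,hbd1⟩ := mem_P3.mp hm1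
          obtain ⟨hab2,hbc2,hcd2,hac2,hbd2⟩ := mem_P3.mp hm2
          simp only at he1 he2
          have hcc : φ s(c1,d1) = φ s(c2,d2) := by
            rw [← he1, ← he2, ea, eb1, eb2]
          have hedge : s(c1,d1) = s(c2,d2) := by
            by_contra hne
            exact hφ (G.mem_edgeSet.mpr hcd1) (G.mem_edgeSet.mpr hcd2) hne
              ⟨c1, by simp, by rw [ecc]; simp⟩ hcc
          have hd12 : d1 = d2 := by
            rcases Sym2.eq_iff.mp hedge with ⟨_, h⟩ | ⟨h1, h2⟩
            · exact h
            · exact absurd (ecc.symm.trans h1) hcd2.ne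
          rw [ea, eb1, ← eb2, ecc, hd12]
      _ = 6 * (E2 G).card := by rw [Finset.sum_const, smul_eq_mul, mul_comm]

lemma fiber_nu_le (hg : G.girth = 5) (hd : G.diam = 2) {T : Finset V}
    (hT : T ∈ (P3 G).image (nu G)) :
    ((P3 G).filter fun q => nu G q = T).card ≤ 10 := by
  obtain ⟨q0, hq0, hnu0⟩ := Finset.mem_image.mp hT
  obtain ⟨a,b,c,d⟩ := q0
  have hC : C5 G a b c d (xcomp G a d) := P3.toC5 hg hd hq0
  set x := xcomp G a d with hx
  have hT5 : T = {a,b,c,d,x} := by rw [← hnu0]; rfl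
  have hmemT : ∀ q ∈ (P3 G).filter fun q => nu G q = T,
      q.1 ∈ ({a,b,c,d,x} : Finset V) ∧ q.2.1 ∈ ({a,b,c,d,x} : Finset V) ∧
      q.2.2.1 ∈ ({a,b,c,d,x} : Finset V) ∧ q.2.2.2 ∈ ({a,b,c,d,x} : Finset V) := by
    intro q hq
    obtain ⟨hqP, hqnu⟩ := Finset.mem_filter.mp hq
    rw [← hT5, ← hqnu]
    refine ⟨?_, ?_, ?_, ?_⟩ <;> simp [nu]
  refine le_trans (Finset.card_le_card_of_injOn (fun q => (q.1, q.2.1))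
    (t := ({(a,b),(b,c),(c,d),(d,x),(x,a),(b,a),(c,b),(d,c),(x,d),(a,x)} : Finset (V×V)))
    ?_ ?_) ?_
  · intro q hq
    obtain ⟨h1, h2, _, _⟩ := hmemT q hq
    obtain ⟨hqP, _⟩ := Finset.mem_filter.mp hq
    have hadj : G.Adj q.1 q.2.1 := by
      have := Finset.mem_filter.mp hqP
      exact this.2.1
    exact hC.adj_class hg h1 h2 hadj
  · rintro ⟨a1,b1,c1,d1⟩ hq1 ⟨a2,b2,c2,d2⟩ hq2 hpair
    simp only [Finset.mem_coe] at hq1 hq2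
    have ea : a1 = a2 := (Prod.ext_iff.mp hpair).1
    have eb : b1 = b2 := (Prod.ext_iff.mp hpair).2
    obtain ⟨m11, m12, m13, m14⟩ := hmemT _ hq1
    obtain ⟨m21, m22, m23, m24⟩ := hmemT _ hq2
    obtain ⟨p11, _⟩ := Finset.mem_filter.mp hq1
    obtain ⟨p21, _⟩ := Finset.mem_filter.mp hq2
    obtain ⟨j1,j2,j3,j4,j5⟩ := mem_P3.mp p11
    obtain ⟨k1,k2,k3,k4,k5⟩ := mem_P3.mp p21
    have ec : c1 = c2 := by
      refine hC.next_unique hg m11 m12 m13 m23 j1 j2 ?_ ?_ ?_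
      · rw [eb]; exact k2
      · exact fun h => j4 h.symm
      · rw [← ea] at k4; exact fun h => k4 h.symm
    have ed : d1 = d2 := by
      refine hC.next_unique hg m12 m13 m14 m24 j2 j3 ?_ ?_ ?_
      · rw [ec]; exact k3
      · exact fun h => j5 h.symm
      · rw [← eb] at k5; exact fun h => k5 h.symm
    rw [Prod.ext_iff]; exact ⟨ea, by rw [eb, ec, ed]⟩
  · refine le_trans (Finset.card_insert_le _ _) (Nat.succ_le_succ ?_)
    refine le_trans (Finset.card_insert_le _ _) (Nat.succ_le_succ ?_)
    refine le_trans (Finset.card_insert_le _ _) (Nat.succ_le_succ ?_)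
    refine le_trans (Finset.card_insert_le _ _) (Nat.succ_le_succ ?_)
    refine le_trans (Finset.card_insert_le _ _) (Nat.succ_le_succ ?_)
    refine le_trans (Finset.card_insert_le _ _) (Nat.succ_le_succ ?_)
    refine le_trans (Finset.card_insert_le _ _) (Nat.succ_le_succ ?_)
    refine le_trans (Finset.card_insert_le _ _) (Nat.succ_le_succ ?_)
    refine le_trans (Finset.card_insert_le _ _) (Nat.succ_le_succ ?_)
    simp

lemma C5.cycle_walk {v1 v2 v3 v4 v5 : V} (h : C5 G v1 v2 v3 v4 v5) :
    ∃ w : G.Walk v1 v1, w.IsCycle ∧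
      w.edges = [s(v1,v2), s(v2,v3), s(v3,v4), s(v4,v5), s(v5,v1)] := by
  rw [C5_def] at h
  obtain ⟨h12,h23,h34,h45,h51,n13,n24,n35,n14,n25⟩ := h
  refine ⟨.cons h12 (.cons h23 (.cons h34 (.cons h45 (.cons h51 .nil)))), ?_, by simp⟩
  simp [Walk.isCycle_def, Walk.isTrail_def, Sym2.eq, Sym2.rel_iff',
    h12.ne, h23.ne, h34.ne, h45.ne, h51.ne, h12.ne', h23.ne', h34.ne', h45.ne', h51.ne',
    n13, n24, n35, n14, n25, n13.symm, n24.symm, n35.symm, n14.symm, n25.symm]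

lemma C5.mono5 {C : Type v} (φ : Sym2 V → C)
    (hφ : ∀ ⦃e₁ e₂ : Sym2 V⦄, e₁ ∈ G.edgeSet → e₂ ∈ G.edgeSet → e₁ ≠ e₂ →
      (∃ y, y ∈ e₁ ∧ y ∈ e₂) → φ e₁ ≠ φ e₂)
    {v1 v2 v3 v4 v5 : V} (h : C5 G v1 v2 v3 v4 v5)
    (hnr : ∀ (u : V) (w : G.Walk u u), w.IsCycle → ¬ (w.edges.map φ).Nodup) :
    φ s(v1,v2) = φ s(v3,v4) ∨ φ s(v4,v5) = φ s(v1,v2) ∨ φ s(v2,v3) = φ s(v4,v5) ∨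
    φ s(v5,v1) = φ s(v2,v3) ∨ φ s(v3,v4) = φ s(v5,v1) := by
  obtain ⟨w, hcyc, hedges⟩ := h.cycle_walk
  have hnd := hnr v1 w hcyc
  rw [hedges] at hnd
  rw [C5_def] at h
  obtain ⟨h12,h23,h34,h45,h51,n13,n24,n35,n14,n25⟩ := h
  have hprop : ∀ (x y z : V), G.Adj x y → G.Adj y z → x ≠ z → φ s(x,y) ≠ φ s(y,z) := by
    intro x y z hxy hyz hxz
    refine hφ (G.mem_edgeSet.mpr hxy) (G.mem_edgeSet.mpr hyz) ?_ ⟨y, by simp, by simp⟩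
    intro heq
    rcases Sym2.eq_iff.mp heq with ⟨hxe, _⟩ | ⟨hxe, _⟩
    · exact hxy.ne hxe
    · exact hxz hxe
  simp only [List.map_cons, List.map_nil, List.nodup_cons, List.mem_cons, List.mem_singleton,
    List.not_mem_nil, or_false, List.nodup_nil, and_true, not_and, not_not] at hnd
  have p12_23 : φ s(v1,v2) ≠ φ s(v2,v3) := hprop v1 v2 v3 h12 h23 n13
  have p23_34 : φ s(v2,v3) ≠ φ s(v3,v4) := hprop v2 v3 v4 h23 h34 n24
  have p34_45 : φ s(v3,v4) ≠ φ s(v4,v5) := hprop v3 v4 v5 h34 h45 n35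
  have p45_51 : φ s(v4,v5) ≠ φ s(v5,v1) := hprop v4 v5 v1 h45 h51 (fun h => n14 h.symm)
  have p12_51 : φ s(v1,v2) ≠ φ s(v5,v1) :=
    (hprop v5 v1 v2 h51 h12 (fun h => n25 h.symm)).symm
  by_contra hcon2
  push_neg at hcon2
  obtain ⟨g1,g2,g3,g4,g5⟩ := hcon2
  exact hnd (by push_neg; exact ⟨p12_23, g1, fun h => g2 h.symm, p12_51⟩)
            (by push_neg; exact ⟨p23_34, g3, fun h => g4 h.symm⟩)
            (by push_neg; exact ⟨p34_45, g5⟩)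
            p45_51

lemma C5.two_mono {C : Type v} (φ : Sym2 V → C) (hg : G.girth = 5)
    {v1 v2 v3 v4 v5 : V} (h : C5 G v1 v2 v3 v4 v5) (hm : φ s(v1,v2) = φ s(v3,v4)) :
    ∃ q1 q2 : V×V×V×V, q1 ≠ q2 ∧ q1 ∈ P3 G ∧ q2 ∈ P3 G ∧
      φ s(q1.1,q1.2.1) = φ s(q1.2.2.1,q1.2.2.2) ∧ φ s(q2.1,q2.2.1) = φ s(q2.2.2.1,q2.2.2.2) ∧
      nu G q1 = {v1,v2,v3,v4,v5} ∧ nu G q2 = {v1,v2,v3,v4,v5} := by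
  have h2 : C5 G v4 v3 v2 v1 v5 := h.rev.rot
  obtain ⟨hp1, hn1⟩ := h.toP3 hg
  obtain ⟨hp2, hn2⟩ := h2.toP3 hg
  have n14 : v1 ≠ v4 := ((C5_def v1 v2 v3 v4 v5).mp h).2.2.2.2.2.2.2.2.1
  refine ⟨(v1,v2,v3,v4), (v4,v3,v2,v1), ?_, hp1, hp2, hm, ?_, hn1, ?_⟩
  · intro he
    exact n14 (congrArg Prod.fst he)
  · show φ s(v4,v3) = φ s(v2,v1)
    rw [show s(v4,v3) = s(v3,v4) from Sym2.eq_swap, show s(v2,v1) = s(v1,v2) from Sym2.eq_swap]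
    exact hm.symm
  · rw [hn2]; ext y; simp; tauto
end HoffmanSingletonAux

theorem hoffmanSingleton_PRCF_bad {V : Type u} [Fintype V] (G : SimpleGraph V)
    [DecidableRel G.Adj]
    (hreg : G.IsRegularOfDegree 7) (hgirth : G.girth = 5) (hdiam : G.diam = 2) :
    ∀ {C : Type v} (φ : Sym2 V → C), IsProperEdgeColoring G φ →
      ∃ (u : V) (c : G.Walk u u), c.IsCycle ∧ (c.edges.map φ).Nodup := by
  intro C φ hφ
  by_contra hcon
  push_neg at hcon
  classical
  have hφ' : ∀ ⦃e₁ e₂ : Sym2 V⦄, e₁ ∈ G.edgeSet → e₂ ∈ G.edgeSet → e₁ ≠ e₂ →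
      (∃ y, y ∈ e₁ ∧ y ∈ e₂) → φ e₁ ≠ φ e₂ := hφ
  have hedge : 0 < (E2 G).card := by
    have hna : ¬ G.IsAcyclic := by
      intro hA
      rw [hA.girth_eq_zero] at hgirth
      omega
    obtain ⟨u, w, hw, _⟩ := exists_girth_eq_length.mpr hna
    cases w with
    | nil => exact absurd hw (by simp [Walk.isCycle_def, Walk.isCircuit_def])
    | @cons _ v2 _ h p =>
      exact Finset.card_pos.mpr ⟨(u, v2), mem_E2.mpr h⟩
  have hreg' : ∀ (I : ∀ v : V, Fintype (G.neighborSet v)) (v : V),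
      @SimpleGraph.degree V G v (I v) = 7 := by
    intro I v
    have hset : (@SimpleGraph.neighborFinset V G v (I v)) =
        @SimpleGraph.neighborFinset V G v (@SimpleGraph.neighborSetFintype V G _ _ v) := by
      ext w
      simp [SimpleGraph.mem_neighborFinset]
    calc @SimpleGraph.degree V G v (I v)
        = (@SimpleGraph.neighborFinset V G v (@SimpleGraph.neighborSetFintype V G _ _ v)).card :=
          congrArg Finset.card hset
      _ = 7 := hreg v
  have h7 : (P3 G).card = 36 * (E2 G).card := card_P3 (fun v => by convert hreg' (fun w => inferInstance) v)
  have hM6 : ((P3 G).filter fun q => φ s(q.1,q.2.1) = φ s(q.2.2.1,q.2.2.2)).card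
      ≤ 6 * (E2 G).card := card_mono_le (fun v => by convert hreg' (fun w => inferInstance) v) φ hφ'
  have h2 : (P3 G).card ≤ 10 * ((P3 G).image (nu G)).card := by
    rw [Finset.card_eq_sum_card_fiberwise (f := nu G) (t := (P3 G).image (nu G))
      (fun q hq => Finset.mem_image_of_mem _ hq)]
    calc ∑ T ∈ (P3 G).image (nu G), ((P3 G).filter fun q => nu G q = T).card
        ≤ ∑ _T ∈ (P3 G).image (nu G), 10 :=
          Finset.sum_le_sum (fun T hT => fiber_nu_le hgirth hdiam hT)
      _ = 10 * ((P3 G).image (nu G)).card := by rw [Finset.sum_const, smul_eq_mul, mul_comm]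
  have h4 : ∀ T ∈ (P3 G).image (nu G), 2 ≤
      (((P3 G).filter fun q => φ s(q.1,q.2.1) = φ s(q.2.2.1,q.2.2.2)).filter
        fun q => nu G q = T).card := by
    intro T hT
    obtain ⟨q0, hq0, hnu0⟩ := Finset.mem_image.mp hT
    obtain ⟨a,b,c,d⟩ := q0
    have hC : C5 G a b c d (xcomp G a d) := P3.toC5 hgirth hdiam hq0
    set x := xcomp G a d with hx
    have hT5 : T = {a,b,c,d,x} := by rw [← hnu0]; rfl
    have build : ∀ (w1 w2 w3 w4 w5 : V), C5 G w1 w2 w3 w4 w5 →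
        φ s(w1,w2) = φ s(w3,w4) → ({w1,w2,w3,w4,w5} : Finset V) = T →
        2 ≤ (((P3 G).filter fun q => φ s(q.1,q.2.1) = φ s(q.2.2.1,q.2.2.2)).filter
          fun q => nu G q = T).card := by
      intro w1 w2 w3 w4 w5 hC' hm' hTT
      obtain ⟨q1,q2,hne,hp1,hp2,hm1,hm2,hn1,hn2⟩ := hC'.two_mono φ hgirth hm'
      refine Finset.one_lt_card.mpr ⟨q1, ?_, q2, ?_, hne⟩
      · exact Finset.mem_filter.mpr ⟨Finset.mem_filter.mpr ⟨hp1, hm1⟩, hn1.trans hTT⟩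
      · exact Finset.mem_filter.mpr ⟨Finset.mem_filter.mpr ⟨hp2, hm2⟩, hn2.trans hTT⟩
    rcases hC.mono5 φ hφ' hcon with hm|hm|hm|hm|hm
    · exact build a b c d x hC hm hT5.symm
    · exact build d x a b c hC.rot.rot.rot hm (by rw [hT5]; ext y; simp; tauto)
    · exact build b c d x a hC.rot hm (by rw [hT5]; ext y; simp; tauto)
    · exact build x a b c d hC.rot.rot.rot.rot hm (by rw [hT5]; ext y; simp; tauto)
    · exact build c d x a b hC.rot.rot hm (by rw [hT5]; ext y; simp; tauto)
  have h5 : 2 * ((P3 G).image (nu G)).card ≤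
      ((P3 G).filter fun q => φ s(q.1,q.2.1) = φ s(q.2.2.1,q.2.2.2)).card := by
    rw [Finset.card_eq_sum_card_fiberwise (f := nu G) (t := (P3 G).image (nu G))
      (fun q hq => Finset.mem_image_of_mem _ (Finset.mem_filter.mp hq).1)]
    calc 2 * ((P3 G).image (nu G)).card
        = ∑ _T ∈ (P3 G).image (nu G), 2 := by rw [Finset.sum_const, smul_eq_mul, mul_comm]
      _ ≤ _ := Finset.sum_le_sum h4
  omega
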